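/- arXiv:2309.02710 — 2 statements merged into one kernel-verified Lean document; each statement's English description precedes it below -/
import Mathlib

section
/- Let X ⊆ ℝ^d be a finite set of n points, let z be an integer with 1 ≤ z < n, and let S ⊆ ℝ^d be a nonempty finite set. If ∑_{x∈X} min{φ_{{x}}(S), ρ_X(S)/z} ≤ γ·ρ* for some γ > 0 and some value ρ* ≥ 0 (i.e., the condition of the thresholded sum holds with parameter η = 1), then ρ_X(S) ≤ γ·ρ*. In other words, with η = 1 the algorithm achieves a γ-approximation while discarding only z points as outliers. -/
open Finset

open scoped Classical

/-- `phiPt x S` is the squared distance from `x` to its nearest center in `S`,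
i.e. `min_{s ∈ S} ‖x - s‖²`. -/
noncomputable def phiPt {d : ℕ} (x : EuclideanSpace ℝ (Fin d))
    (S : Finset (EuclideanSpace ℝ (Fin d))) : ℝ :=
  sInf ((fun s => ‖x - s‖ ^ 2) '' (S : Set (EuclideanSpace ℝ (Fin d))))

/-- `phi A S = ∑_{x ∈ A} min_{s ∈ S} ‖x - s‖²`, the `k`-means cost of centers `S` on `A`. -/
noncomputable def phi {d : ℕ} (A S : Finset (EuclideanSpace ℝ (Fin d))) : ℝ :=
  ∑ x ∈ A, phiPt x S

/-- The mean (centroid) of a finite set of points. -/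
noncomputable def mean {d : ℕ} (A : Finset (EuclideanSpace ℝ (Fin d))) :
    EuclideanSpace ℝ (Fin d) :=
  (A.card : ℝ)⁻¹ • ∑ x ∈ A, x

/-- `rho X S z` is the cost of the centers `S` on `X` after discarding the `z`
points of `X` farthest from `S`: the minimum of `phi Y S` over `Y ⊆ X` with
`|Y| = |X| - z`. -/
noncomputable def rho {d : ℕ} (X S : Finset (EuclideanSpace ℝ (Fin d))) (z : ℕ) : ℝ :=
  sInf ((fun Y : Finset (EuclideanSpace ℝ (Fin d)) => phi Y S) ''
    {Y : Finset (EuclideanSpace ℝ (Fin d)) | Y ⊆ X ∧ Y.card = X.card - z})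

lemma phiPt_nonneg {d : ℕ} (x : EuclideanSpace ℝ (Fin d))
    (S : Finset (EuclideanSpace ℝ (Fin d))) : 0 ≤ phiPt x S := by
  apply Real.sInf_nonneg
  rintro y ⟨s, -, rfl⟩
  positivity

lemma phi_nonneg {d : ℕ} (A S : Finset (EuclideanSpace ℝ (Fin d))) : 0 ≤ phi A S :=
  Finset.sum_nonneg fun x _ => phiPt_nonneg x S

lemma rho_nonneg {d : ℕ} (X S : Finset (EuclideanSpace ℝ (Fin d))) (z : ℕ) :
    0 ≤ rho X S z := by
  apply Real.sInf_nonneg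
  rintro y ⟨Y, -, rfl⟩
  exact phi_nonneg Y S

lemma rho_le_phi {d : ℕ} (X S Y : Finset (EuclideanSpace ℝ (Fin d))) (z : ℕ)
    (hY : Y ⊆ X) (hc : Y.card = X.card - z) : rho X S z ≤ phi Y S := by
  apply csInf_le
  · exact ⟨0, by rintro y ⟨Y', -, rfl⟩; exact phi_nonneg Y' S⟩
  · exact ⟨Y, ⟨hY, hc⟩, rfl⟩

/-- With threshold parameter `η = 1`, if the thresholded sum
`∑_{x ∈ X} min{φ_{{x}}(S), ρ_X(S)/z}` is at most `γ·ρ*`, then `ρ_X(S) ≤ γ·ρ*`: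
a `γ`-approximation while discarding only `z` points as outliers. -/
theorem stmt2 {d : ℕ} (X S : Finset (EuclideanSpace ℝ (Fin d)))
    (n z : ℕ) (hn : X.card = n) (hz1 : 1 ≤ z) (hz : z < n)
    (hS : S.Nonempty)
    (γ ρstar : ℝ) (hγ : 0 < γ) (hρstar : 0 ≤ ρstar)
    (h : ∑ x ∈ X, min (phiPt x S) (rho X S z / z) ≤ γ * ρstar) :
    rho X S z ≤ γ * ρstar := by
  set r := rho X S z with hr
  have hr0 : 0 ≤ r := rho_nonneg X S z
  have hzR : (0:ℝ) < z := by exact_mod_cast hz1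
  have hrz0 : 0 ≤ r / z := div_nonneg hr0 hzR.le
  have hmin0 : ∀ x ∈ X, 0 ≤ min (phiPt x S) (r / z) := fun x _ =>
    le_min (phiPt_nonneg x S) hrz0
  refine le_trans ?_ h
  set T := X.filter (fun x => r / z ≤ phiPt x S) with hT
  by_cases hcard : z ≤ T.card
  · calc r = (z : ℝ) * (r / z) := by field_simp
      _ ≤ (T.card : ℝ) * (r / z) := by
          apply mul_le_mul_of_nonneg_right _ hrz0
          exact_mod_cast hcard
      _ = ∑ x ∈ T, min (phiPt x S) (r / z) := by
          rw [Finset.sum_congr rfl (fun x hx => ?_), Finset.sum_const, nsmul_eq_mul]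
          exact min_eq_right (Finset.mem_filter.mp hx).2
      _ ≤ ∑ x ∈ X, min (phiPt x S) (r / z) :=
          Finset.sum_le_sum_of_subset_of_nonneg (Finset.filter_subset _ _)
            (fun x hx _ => hmin0 x hx)
  · push_neg at hcard
    have hsub : X.card - z ≤ (X \ T).card := by
      rw [Finset.card_sdiff_of_subset (Finset.filter_subset _ _), ← hT]
      have hTle : T.card ≤ X.card := hT ▸ Finset.card_filter_le _ _
      omega
    obtain ⟨Y, hYsub, hYcard⟩ := Finset.exists_subset_card_eq hsub
    have hYX : Y ⊆ X := hYsub.trans (Finset.sdiff_subset)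
    calc r ≤ phi Y S := rho_le_phi X S Y z hYX hYcard
      _ = ∑ x ∈ Y, min (phiPt x S) (r / z) := by
          refine Finset.sum_congr rfl fun x hx => ?_
          have hxT : x ∉ T := (Finset.mem_sdiff.mp (hYsub hx)).2
          have : phiPt x S < r / z := by
            by_contra hlt
            exact hxT (Finset.mem_filter.mpr ⟨hYX hx, not_lt.mp hlt⟩)
          exact (min_eq_left this.le).symm
      _ ≤ ∑ x ∈ X, min (phiPt x S) (r / z) :=
          Finset.sum_le_sum_of_subset_of_nonneg hYX (fun x hx _ => hmin0 x hx)
end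

section
/- Let A ⊆ ℝ^d be a nonempty finite set with mean μ = (1/|A|)∑_{x∈A} x, and let S ⊆ ℝ^d be a nonempty finite set of centers. If φ_A(S) ≥ 64·φ_A({μ}), then φ_A(S) ≤ (64/31)·|A|·φ_{{μ}}(S); in particular, φ_{{μ}}(S) ≥ (31/|A|)·φ_A({μ}). -/
open Finset

open scoped Classical

lemma phiPt_bdd {d : ℕ} (x : EuclideanSpace ℝ (Fin d))
    (S : Finset (EuclideanSpace ℝ (Fin d))) :
    BddBelow ((fun s => ‖x - s‖ ^ 2) '' (S : Set (EuclideanSpace ℝ (Fin d)))) := by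
  refine ⟨0, ?_⟩
  rintro y ⟨s, _, rfl⟩
  positivity

lemma phiPt_le {d : ℕ} (x : EuclideanSpace ℝ (Fin d))
    {S : Finset (EuclideanSpace ℝ (Fin d))} {s : EuclideanSpace ℝ (Fin d)}
    (hs : s ∈ S) : phiPt x S ≤ ‖x - s‖ ^ 2 :=
  csInf_le (phiPt_bdd x S) ⟨s, hs, rfl⟩

lemma phiPt_singleton {d : ℕ} (x y : EuclideanSpace ℝ (Fin d)) :
    phiPt x {y} = ‖x - y‖ ^ 2 := by
  simp [phiPt]

lemma phiPt_mem {d : ℕ} (x : EuclideanSpace ℝ (Fin d))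
    {S : Finset (EuclideanSpace ℝ (Fin d))} (hS : S.Nonempty) :
    ∃ s ∈ S, phiPt x S = ‖x - s‖ ^ 2 := by
  have hfin : ((fun s => ‖x - s‖ ^ 2) '' (S : Set (EuclideanSpace ℝ (Fin d)))).Finite :=
    (S.finite_toSet.image _)
  have hne : ((fun s => ‖x - s‖ ^ 2) '' (S : Set (EuclideanSpace ℝ (Fin d)))).Nonempty :=
    (hS.to_set).image _
  have := hne.csInf_mem hfin
  obtain ⟨s, hs, hval⟩ := this
  exact ⟨s, hs, hval.symm⟩

/-- first property of Lemma 2. If `φ_A(S) ≥ 64·φ_A({μ})` where `μ` is the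
mean of `A`, then `φ_A(S) ≤ (64/31)·|A|·φ_{{μ}}(S)`; in particular
`φ_{{μ}}(S) ≥ (31/|A|)·φ_A({μ})`. -/
theorem stmt3 {d : ℕ} (A S : Finset (EuclideanSpace ℝ (Fin d)))
    (hA : A.Nonempty) (hS : S.Nonempty)
    (h : phi A S ≥ 64 * phi A {mean A}) :
    phi A S ≤ (64 / 31) * A.card * phiPt (mean A) S ∧
      phiPt (mean A) S ≥ (31 / A.card) * phi A {mean A} := by
  obtain ⟨s, hsS, hsval⟩ := phiPt_mem (mean A) hS
  set μ := mean A
  set n : ℝ := (A.card : ℝ) with hn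
  have hnpos : (0 : ℝ) < n := by
    have := hA.card_pos
    rw [hn]
    exact_mod_cast this
  have key : phi A S ≤ 2 * phi A {μ} + 2 * n * phiPt μ S := by
    have hb : ∀ x ∈ A, phiPt x S ≤ 2 * ‖x - μ‖ ^ 2 + 2 * phiPt μ S := by
      intro x _
      have h1 : phiPt x S ≤ ‖x - s‖ ^ 2 := phiPt_le x hsS
      have h2 : ‖x - s‖ ≤ ‖x - μ‖ + ‖μ - s‖ := by
        have := norm_add_le (x - μ) (μ - s)
        simpa using this
      nlinarith [sq_nonneg (‖x - μ‖ - ‖μ - s‖), norm_nonneg (x - s), norm_nonneg (x - μ), norm_nonneg (μ - s)]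
    calc phi A S ≤ ∑ x ∈ A, (2 * ‖x - μ‖ ^ 2 + 2 * phiPt μ S) := Finset.sum_le_sum hb
      _ = 2 * phi A {μ} + 2 * n * phiPt μ S := by
          rw [Finset.sum_add_distrib, Finset.sum_const, ← Finset.mul_sum]
          simp only [phi, phiPt_singleton, nsmul_eq_mul, hn]
          ring
  have hQ : 0 ≤ phi A {μ} := by
    apply Finset.sum_nonneg
    intro x _
    rw [phiPt_singleton]; positivity
  constructor
  · nlinarith
  · rw [ge_iff_le, div_mul_eq_mul_div, div_le_iff₀ hnpos]
    nlinarith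
end
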